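/- Loop insertion inverts single loop erasure: let ω be a walk on ℤ^d that is not self-avoiding, and let C = (ω_{τ*}, …, ω_τ) be the self-avoiding polygon removed by the single loop erasure LE¹(ω). Then inserting the oriented cycle determined by C into LE¹(ω) recovers ω: LE¹(ω) ⊕ [C] = ω, where [C] is the rotation class of C. -/

import Mathlib

open scoped ENNReal NNReal BigOperators Classical

noncomputable section

namespace LWW

/-- A point of the lattice ℤ^d. -/
abbrev Pt (d : ℕ) := Fin d → ℤ

/-- ℓ¹ distance on ℤ^d. -/
def dist1 {d : ℕ} (x y : Pt d) : ℕ := ∑ i, (x i - y i).natAbs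

/-- Nearest-neighbour adjacency on ℤ^d. -/
def Adj {d : ℕ} (x y : Pt d) : Prop := dist1 x y = 1

/-- Auxiliary function for single loop erasure: scan the list, keeping the
self-avoiding prefix `pre`; when the first repeated vertex is met, return the
loop-erased list together with the removed loop. -/
def le1Aux {α : Type*} [DecidableEq α] : List α → List α → List α × Option (List α)
  | pre, [] => (pre, none)
  | pre, x :: rest =>
    if x ∈ pre then
      (pre.takeWhile (fun y => y ≠ x) ++ x :: rest,
        some (pre.dropWhile (fun y => y ≠ x) ++ [x]))
    else le1Aux (pre ++ [x]) rest

/-- Single loop erasure LE¹. -/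
def LE1 {α : Type*} [DecidableEq α] (l : List α) : List α := (le1Aux [] l).1

/-- The loop removed by a single loop erasure (if the list is not self-avoiding). -/
def removedLoop {α : Type*} [DecidableEq α] (l : List α) : Option (List α) := (le1Aux [] l).2

/-- Iterate single loop erasure (with fuel), collecting the multiset of removed loops. -/
def leAux {α : Type*} [DecidableEq α] : ℕ → List α → List α × Multiset (List α)
  | 0, l => (l, 0)
  | n + 1, l =>
    match le1Aux ([] : List α) l with
    | (_, none) => (l, 0)
    | (l', some c) => ((leAux n l').1, c ::ₘ (leAux n l').2)

/-- Loop erasure LE. -/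
def LE {α : Type*} [DecidableEq α] (l : List α) : List α := (leAux l.length l).1

/-- The multiset of loops removed by loop erasure. -/
def erasedLoops {α : Type*} [DecidableEq α] (l : List α) : Multiset (List α) :=
  (leAux l.length l).2

/-- The number of loops removed by loop erasure. -/
def nLoops {α : Type*} [DecidableEq α] (l : List α) : ℕ := Multiset.card (erasedLoops l)

/-- A (finite) nearest-neighbour walk on ℤ^d, recorded as its (nonempty) list of vertices. -/
structure Walk (d : ℕ) where
  pts : List (Pt d)
  ne : pts ≠ []
  chain : pts.Chain' Adj

namespace Walk

variable {d : ℕ}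

/-- The number of steps of a walk. -/
def len (ω : Walk d) : ℕ := ω.pts.length - 1

/-- The initial vertex of a walk. -/
def start (ω : Walk d) : Pt d := ω.pts.headI

/-- The final vertex of a walk. -/
def finish (ω : Walk d) : Pt d := ω.pts.getLastD default

/-- The range (set of visited vertices) of a walk. -/
def range (ω : Walk d) : Set (Pt d) := {x | x ∈ ω.pts}

/-- The `i`-th vertex of a walk. -/
def nth (ω : Walk d) (i : ℕ) : Pt d := ω.pts.getD i default

/-- A walk is a loop if it has at least one step and ends where it began. -/
def IsLoop (ω : Walk d) : Prop := 1 ≤ ω.len ∧ ω.finish = ω.start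

end Walk

/-- The list of vertices of a self-avoiding polygon: a closed nearest-neighbour
walk all of whose vertices are distinct except that the last equals the first. -/
def IsSAPList {d : ℕ} (l : List (Pt d)) : Prop :=
  l.Chain' Adj ∧ 3 ≤ l.length ∧ l.getLastD default = l.headI ∧ l.dropLast.Nodup

/-- Change the initial vertex of a polygon list by a cyclic rotation. -/
def polyRot {d : ℕ} (l : List (Pt d)) (r : ℕ) : List (Pt d) :=
  l.dropLast.rotate r ++ [(l.dropLast.rotate r).headI]

/-- An isometry of the lattice ℤ^d: a bijection preserving ℓ¹ distance. -/
def IsLatticeIso {d : ℕ} (R : Pt d ≃ Pt d) : Prop :=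
  ∀ x y : Pt d, dist1 (R x) (R y) = dist1 x y

/-- The symmetry assumption on the loop activities: invariance under isometries of ℤ^d
and under change of initial vertex and of orientation of the polygon. -/
def SymmAssumption {d : ℕ} (lam : List (Pt d) → ℝ≥0) : Prop :=
  (∀ R : Pt d ≃ Pt d, IsLatticeIso R → ∀ l : List (Pt d), IsSAPList l →
      lam (l.map R) = lam l) ∧
  (∀ l : List (Pt d), IsSAPList l → ∀ r : ℕ, lam (polyRot l r) = lam l) ∧
  (∀ l : List (Pt d), IsSAPList l → lam l.reverse = lam l)

/-- The boundedness assumption: sup over self-avoiding polygons of the activity is finite. -/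
def BoundedAssumption {d : ℕ} (lam : List (Pt d) → ℝ≥0) : Prop :=
  ∃ M : ℝ≥0, ∀ l : List (Pt d), IsSAPList l → lam l ≤ M

/-- The product of the loop activities over the loops erased from `ω`, i.e. λ^{n_L(ω)}. -/
def wt0 {d : ℕ} (lam : List (Pt d) → ℝ≥0) (ω : Walk d) : ℝ≥0∞ :=
  ((erasedLoops ω.pts).map (fun η => (lam η : ℝ≥0∞))).prod

/-- The λ-LWW weight w_{λ,z}(ω) = z^{|ω|} λ^{n_L(ω)}. -/
def wt {d : ℕ} (lam : List (Pt d) → ℝ≥0) (z : ℝ≥0) (ω : Walk d) : ℝ≥0∞ :=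
  (z : ℝ≥0∞) ^ ω.len * wt0 lam ω

/-- The λ-LWW two-point function. -/
def G {d : ℕ} (lam : List (Pt d) → ℝ≥0) (z : ℝ≥0) (x y : Pt d) : ℝ≥0∞ :=
  ∑' ω : Walk d, if ω.start = x ∧ ω.finish = y then wt lam z ω else 0

/-- The λ-LWW loop measure μ_{λ,z}(A;B). -/
def mu {d : ℕ} (lam : List (Pt d) → ℝ≥0) (z : ℝ≥0) (A B : Set (Pt d)) : ℝ≥0∞ :=
  ∑' ω : Walk d,
    if ω.IsLoop ∧ (ω.range ∩ A).Nonempty ∧ ω.range ∩ B = ∅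
    then wt lam z ω / (ω.len : ℝ≥0∞) else 0

/-- The generalized λ-LWW loop measure μ_{λ,z}(A,B;C) with two hitting sets. -/
def mu2 {d : ℕ} (lam : List (Pt d) → ℝ≥0) (z : ℝ≥0) (A B C : Set (Pt d)) : ℝ≥0∞ :=
  ∑' ω : Walk d,
    if ω.IsLoop ∧ (ω.range ∩ A).Nonempty ∧ (ω.range ∩ B).Nonempty ∧ ω.range ∩ C = ∅
    then wt lam z ω / (ω.len : ℝ≥0∞) else 0

/-- exp : [0,∞] → [0,∞] with exp(∞) = ∞. -/
def eexp (x : ℝ≥0∞) : ℝ≥0∞ := if x = ⊤ then ⊤ else ENNReal.ofReal (Real.exp x.toReal)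

/-- The loop-erased λ-LWW weight w̄_{λ,z}(η) of a self-avoiding walk η. -/
def wbar {d : ℕ} (lam : List (Pt d) → ℝ≥0) (z : ℝ≥0) (η : Walk d) : ℝ≥0∞ :=
  ∑' ω : Walk d, if LE ω.pts = η.pts then wt lam z ω else 0

/-- c_n^λ : the total λ-LWW mass of n-step walks started at the origin. -/
def cN {d : ℕ} (lam : List (Pt d) → ℝ≥0) (n : ℕ) : ℝ≥0∞ :=
  ∑' ω : Walk d, if ω.start = 0 ∧ ω.len = n then wt0 lam ω else 0

/-- The susceptibility χ_λ(z) = Σ_n c_n^λ z^n. -/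
def chi {d : ℕ} (lam : List (Pt d) → ℝ≥0) (z : ℝ) : ℝ≥0∞ :=
  ∑' n : ℕ, cN lam n * ENNReal.ofReal z ^ n

/-- The critical point z_c(λ): the radius of convergence of the susceptibility
(for a power series with nonnegative coefficients this is the supremum of the
set of nonnegative z at which the series converges). -/
def zc {d : ℕ} (lam : List (Pt d) → ℝ≥0) : ℝ :=
  sSup {z : ℝ | 0 ≤ z ∧ chi lam z < ⊤}


/-- Loop insertion `η ⊕ [C]`: `i` is the minimal index with `η_i` a vertex of the
oriented cycle `[C]` (the rotation class of the self-avoiding polygon `C`); the unique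
representative `(c_0,…,c_k)` of `[C]` with `c_0 = η_i` is spliced into `η` at
position `i`. -/
def insertLoop {α : Type*} [DecidableEq α] [Inhabited α] (η C : List α) : List α :=
  match η.findIdx? (fun y => decide (y ∈ C)) with
  | none => η
  | some i =>
      η.take i
        ++ (C.dropLast.rotate (C.dropLast.idxOf (η.getD i default))
              ++ [η.getD i default])
        ++ η.drop (i + 1)


section Helpers

variable {α : Type*} [DecidableEq α] [Inhabited α]

private lemma findIdx?_aux (p : α → Bool) :
    ∀ (a : List α) (i : ℕ) (x : α) (b : List α), (∀ y ∈ a, p y = false) → p x = true →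
      List.findIdx?.go p (a ++ x :: b) i = some (i + a.length) := by
  intro a
  induction a with
  | nil => intro i x b _ hx; simp [List.findIdx?.go, hx]
  | cons z a ih =>
    intro i x b ha hx
    have hz : p z = false := ha z (by simp)
    have h2 := ih (i + 1) x b (fun y hy => ha y (by simp [hy])) hx
    rw [List.cons_append, List.findIdx?.go, if_neg (by simp [hz]), h2]
    simp only [List.length_cons]
    congr 1
    omega

private lemma getD_append_cons (a : List α) (x : α) (b : List α) :
    (a ++ x :: b).getD a.length default = x := by
  induction a with
  | nil => simp
  | cons z a ih => simpa using ih

private lemma dropWhile_ne_mem {x : α} :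
    ∀ {pre : List α}, x ∈ pre →
      ∃ t, pre.dropWhile (fun y => y ≠ x) = x :: t := by
  intro pre hx
  induction pre with
  | nil => simp at hx
  | cons a pre ih =>
    by_cases hax : a = x
    · subst hax
      exact ⟨pre, by simp [List.dropWhile]⟩
    · have hx' : x ∈ pre := by
        rcases List.mem_cons.mp hx with h | h
        · exact absurd h.symm hax
        · exact h
      rcases ih hx' with ⟨t, ht⟩
      refine ⟨t, ?_⟩
      simpa [List.dropWhile, hax] using ht

private lemma le1Aux_insert :
    ∀ (l pre : List α), pre.Nodup → ∀ η C, le1Aux pre l = (η, some C) →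
      insertLoop η C = pre ++ l := by
  intro l
  induction l with
  | nil => intro pre _ η C h; simp [le1Aux] at h
  | cons x rest ih =>
    intro pre hpre η C h
    rw [le1Aux] at h
    by_cases hx : x ∈ pre
    · rw [if_pos hx] at h
      obtain ⟨hη, hC⟩ : _ ∧ _ := Prod.mk.injEq .. ▸ h
      rw [Option.some_inj] at hC
      set tW := pre.takeWhile (fun y => y ≠ x) with htW
      set dW := pre.dropWhile (fun y => y ≠ x) with hdW
      have hsplit : tW ++ dW = pre := List.takeWhile_append_dropWhile ..
      rcases dropWhile_ne_mem hx with ⟨t, ht⟩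
      have hnd : (tW ++ dW).Nodup := hsplit ▸ hpre
      have hdisj : ∀ y ∈ tW, y ∉ dW := by
        intro y hy hy'
        exact (List.nodup_append'.mp hnd).2.2 hy hy'
      have hxC : ∀ y ∈ tW, y ∉ C := by
        intro y hy hyC
        have hyne : y ≠ x := by
          have := List.mem_takeWhile_imp (htW ▸ hy)
          simpa using this
        rw [← hC] at hyC
        rcases List.mem_append.mp hyC with h1 | h1
        · exact hdisj y hy h1
        · exact hyne (by simpa using h1)
      have hxmem : x ∈ C := by rw [← hC]; simp
      have hfind : η.findIdx? (fun y => decide (y ∈ C)) = some tW.length := by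
        rw [← hη]
        have := findIdx?_aux (fun y => decide (y ∈ C)) tW 0 x rest
          (fun y hy => by simpa using hxC y hy) (by simpa using hxmem)
        simpa [List.findIdx?] using this
      have hget : η.getD tW.length default = x := by
        rw [← hη]; exact getD_append_cons ..
      have hdropLast : C.dropLast = dW := by
        rw [← hC]; exact List.dropLast_concat
      have hdWt : dW = x :: t := hdW.trans ht
      rw [insertLoop, hfind]
      simp only [hget, hdropLast, hdWt]
      have hidx : List.idxOf x (x :: t) = 0 := by simp
      rw [hidx, List.rotate_zero, ← hη, List.take_left]
      have hdrop : (tW ++ x :: rest).drop (tW.length + 1) = rest := by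
        have he : tW ++ x :: rest = (tW ++ [x]) ++ rest := by simp
        rw [he]
        exact List.drop_left' (by simp)
      rw [hdrop, ← hsplit, hdWt]
      simp
    · rw [if_neg hx] at h
      have hnd : (pre ++ [x]).Nodup := by
        simpa [List.nodup_append] using ⟨hpre, fun a ha hax => hx (hax ▸ ha)⟩
      have := ih (pre ++ [x]) hnd η C h
      simpa using this

end Helpers

/-- **Loop insertion inverts single loop erasure.**  Let `ω` be a walk on ℤ^d that is
not self-avoiding, and let `C = (ω_{τ*},…,ω_τ)` be the self-avoiding polygon removed
by the single loop erasure `LE¹(ω)`.  Then inserting the oriented cycle determined by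
`C` into `LE¹(ω)` recovers `ω`: `LE¹(ω) ⊕ [C] = ω`. -/
theorem loop_insertion_inverts_erasure {d : ℕ} (ω : Walk d) (h : ¬ ω.pts.Nodup)
    (C : List (Pt d)) (hC : removedLoop ω.pts = some C) :
    insertLoop (LE1 ω.pts) C = ω.pts := by
  have h2 : le1Aux ([] : List (Pt d)) ω.pts = (LE1 ω.pts, some C) := by
    rw [LE1]
    exact Prod.ext rfl hC
  simpa using le1Aux_insert ω.pts [] List.nodup_nil _ _ h2


end LWW
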